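/- Let ρ₀, ρ₁, ρ₂ be the 3×3 complex diagonal matrices ρ₀ = diag(1/2, 0, 1/2), ρ₁ = diag(0, 1/2, 1/2), ρ₂ = diag(1/2, 1/2, 0). Then: (i) for all positive semidefinite 3×3 complex matrices E₀, E₁, E₂ with E₀ + E₁ + E₂ = I, the real part of (1/3)·(Tr(E₀ρ₀) + Tr(E₁ρ₁) + Tr(E₂ρ₂)) is at most 1/2; and (ii) there exist positive semidefinite 3×3 complex matrices E₀, E₁, E₂ with E₀ + E₁ + E₂ = I achieving (1/3)·(Tr(E₀ρ₀) + Tr(E₁ρ₁) + Tr(E₂ρ₂)) = 1/2. -/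

import Mathlib

open Matrix
open scoped ComplexOrder

lemma diag_nonneg' {M : Matrix (Fin 3) (Fin 3) ℂ} (h : M.PosSemidef) (i : Fin 3) :
    0 ≤ M i i := by
  exact h.diag_nonneg

lemma diag_re_nonneg {M : Matrix (Fin 3) (Fin 3) ℂ} (h : M.PosSemidef) (i : Fin 3) :
    0 ≤ (M i i).re := by
  have := diag_nonneg' h i
  rw [Complex.le_def] at this; simpa using this.1

lemma diag_im_zero {M : Matrix (Fin 3) (Fin 3) ℂ} (h : M.PosSemidef) (i : Fin 3) :
    (M i i).im = 0 := by
  have := diag_nonneg' h i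
  rw [Complex.le_def] at this; simpa using this.2.symm

/-- The state-discrimination SDP for Protocol 2 has optimal value 1/2:
for the three states `ρ_b = Tr_Y |ψ_b⁺⟩⟨ψ_b⁺|` (qutrit diagonal matrices),
every POVM `{E₀, E₁, E₂}` has success probability at most `1/2`, and some POVM
achieves `1/2`. -/
theorem stmt_6
    (ρ₀ ρ₁ ρ₂ : Matrix (Fin 3) (Fin 3) ℂ)
    (hρ₀ : ρ₀ = !![1/2, 0, 0; 0, 0, 0; 0, 0, 1/2])
    (hρ₁ : ρ₁ = !![0, 0, 0; 0, 1/2, 0; 0, 0, 1/2])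
    (hρ₂ : ρ₂ = !![1/2, 0, 0; 0, 1/2, 0; 0, 0, 0]) :
    (∀ E₀ E₁ E₂ : Matrix (Fin 3) (Fin 3) ℂ,
      E₀.PosSemidef → E₁.PosSemidef → E₂.PosSemidef → E₀ + E₁ + E₂ = 1 →
      ((1 / 3 : ℂ) * ((E₀ * ρ₀).trace + (E₁ * ρ₁).trace + (E₂ * ρ₂).trace)).re ≤ 1 / 2) ∧
    (∃ E₀ E₁ E₂ : Matrix (Fin 3) (Fin 3) ℂ,
      E₀.PosSemidef ∧ E₁.PosSemidef ∧ E₂.PosSemidef ∧ E₀ + E₁ + E₂ = 1 ∧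
      (1 / 3 : ℂ) * ((E₀ * ρ₀).trace + (E₁ * ρ₁).trace + (E₂ * ρ₂).trace) = 1 / 2) := by
  subst hρ₀ hρ₁ hρ₂
  constructor
  · intro E₀ E₁ E₂ h₀ h₁ h₂ hsum
    have c : ∀ i : Fin 3, E₀ i i + E₁ i i + E₂ i i = 1 := by
      intro i
      have := congrFun (congrFun hsum i) i
      simpa [Matrix.one_apply] using this
    have c0 := congrArg Complex.re (c 0)
    have c1 := congrArg Complex.re (c 1)
    have c2 := congrArg Complex.re (c 2)
    simp [Complex.add_re] at c0 c1 c2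
    have n00 := diag_re_nonneg h₀ 0
    have n02 := diag_re_nonneg h₀ 2
    have n11 := diag_re_nonneg h₁ 1
    have n12 := diag_re_nonneg h₁ 2
    have n20 := diag_re_nonneg h₂ 0
    have n21 := diag_re_nonneg h₂ 1
    have n10 := diag_re_nonneg h₁ 0
    have n01 := diag_re_nonneg h₀ 1
    have n22 := diag_re_nonneg h₂ 2
    have i00 := diag_im_zero h₀ 0
    have i02 := diag_im_zero h₀ 2
    have i11 := diag_im_zero h₁ 1
    have i12 := diag_im_zero h₁ 2
    have i20 := diag_im_zero h₂ 0
    have i21 := diag_im_zero h₂ 1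
    simp [Matrix.trace_fin_three, Matrix.mul_apply, Fin.sum_univ_three,
      Complex.add_re, Complex.mul_re, Complex.add_im, Complex.mul_im,
      Complex.div_re, Complex.div_im, Matrix.vecHead, Matrix.vecTail,
      i00, i02, i11, i12, i20, i21]
    ring_nf
    nlinarith [n00, n02, n11, n12, n20, n21, n10, n01, n22, c0, c1, c2]
  · refine ⟨Matrix.diagonal ![0,0,1], Matrix.diagonal ![0,1,0], Matrix.diagonal ![1,0,0],
      Matrix.PosSemidef.diagonal (by intro i; fin_cases i <;> norm_num),
      Matrix.PosSemidef.diagonal (by intro i; fin_cases i <;> norm_num),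
      Matrix.PosSemidef.diagonal (by intro i; fin_cases i <;> norm_num), ?_, ?_⟩
    · ext i j
      fin_cases i <;> fin_cases j <;> simp [Matrix.one_apply]
    · simp [Matrix.trace_fin_three, Matrix.mul_apply, Fin.sum_univ_three]
      ring
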